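/- Let w = (0,1,0,1,0,1,−1) ∈ ℤ^7 and let M ⊆ ℤ^7 be the additive submonoid generated by the 8 vectors {e_1, e_2, e_3, e_4, e_5, e_6, e_7, w} (all finite ℕ-linear combinations of these vectors), where e_1,…,e_7 is the standard basis of ℤ^7. Then the set of irreducible elements of M is exactly {e_1, e_2, e_3, e_4, e_5, e_6, e_7, w}. -/
import Mathlib

/-- The 8 generators `e_1,…,e_7, w ∈ ℤ^7`, with `w = (0,1,0,1,0,1,−1)`. -/
def gens17 : Fin 8 → Fin 7 → ℤ :=
  ![![1, 0, 0, 0, 0, 0, 0],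
    ![0, 1, 0, 0, 0, 0, 0],
    ![0, 0, 1, 0, 0, 0, 0],
    ![0, 0, 0, 1, 0, 0, 0],
    ![0, 0, 0, 0, 1, 0, 0],
    ![0, 0, 0, 0, 0, 1, 0],
    ![0, 0, 0, 0, 0, 0, 1],
    ![0, 1, 0, 1, 0, 1, -1]]

lemma g17_0_0 : gens17 0 0 = 1 := by decide
lemma g17_0_1 : gens17 0 1 = 0 := by decide
lemma g17_0_2 : gens17 0 2 = 0 := by decide
lemma g17_0_3 : gens17 0 3 = 0 := by decide
lemma g17_0_4 : gens17 0 4 = 0 := by decide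
lemma g17_0_5 : gens17 0 5 = 0 := by decide
lemma g17_0_6 : gens17 0 6 = 0 := by decide
lemma g17_1_0 : gens17 1 0 = 0 := by decide
lemma g17_1_1 : gens17 1 1 = 1 := by decide
lemma g17_1_2 : gens17 1 2 = 0 := by decide
lemma g17_1_3 : gens17 1 3 = 0 := by decide
lemma g17_1_4 : gens17 1 4 = 0 := by decide
lemma g17_1_5 : gens17 1 5 = 0 := by decide
lemma g17_1_6 : gens17 1 6 = 0 := by decide
lemma g17_2_0 : gens17 2 0 = 0 := by decide
lemma g17_2_1 : gens17 2 1 = 0 := by decide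
lemma g17_2_2 : gens17 2 2 = 1 := by decide
lemma g17_2_3 : gens17 2 3 = 0 := by decide
lemma g17_2_4 : gens17 2 4 = 0 := by decide
lemma g17_2_5 : gens17 2 5 = 0 := by decide
lemma g17_2_6 : gens17 2 6 = 0 := by decide
lemma g17_3_0 : gens17 3 0 = 0 := by decide
lemma g17_3_1 : gens17 3 1 = 0 := by decide
lemma g17_3_2 : gens17 3 2 = 0 := by decide
lemma g17_3_3 : gens17 3 3 = 1 := by decide
lemma g17_3_4 : gens17 3 4 = 0 := by decide
lemma g17_3_5 : gens17 3 5 = 0 := by decide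
lemma g17_3_6 : gens17 3 6 = 0 := by decide
lemma g17_4_0 : gens17 4 0 = 0 := by decide
lemma g17_4_1 : gens17 4 1 = 0 := by decide
lemma g17_4_2 : gens17 4 2 = 0 := by decide
lemma g17_4_3 : gens17 4 3 = 0 := by decide
lemma g17_4_4 : gens17 4 4 = 1 := by decide
lemma g17_4_5 : gens17 4 5 = 0 := by decide
lemma g17_4_6 : gens17 4 6 = 0 := by decide
lemma g17_5_0 : gens17 5 0 = 0 := by decide
lemma g17_5_1 : gens17 5 1 = 0 := by decide
lemma g17_5_2 : gens17 5 2 = 0 := by decide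
lemma g17_5_3 : gens17 5 3 = 0 := by decide
lemma g17_5_4 : gens17 5 4 = 0 := by decide
lemma g17_5_5 : gens17 5 5 = 1 := by decide
lemma g17_5_6 : gens17 5 6 = 0 := by decide
lemma g17_6_0 : gens17 6 0 = 0 := by decide
lemma g17_6_1 : gens17 6 1 = 0 := by decide
lemma g17_6_2 : gens17 6 2 = 0 := by decide
lemma g17_6_3 : gens17 6 3 = 0 := by decide
lemma g17_6_4 : gens17 6 4 = 0 := by decide
lemma g17_6_5 : gens17 6 5 = 0 := by decide
lemma g17_6_6 : gens17 6 6 = 1 := by decide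
lemma g17_7_0 : gens17 7 0 = 0 := by decide
lemma g17_7_1 : gens17 7 1 = 1 := by decide
lemma g17_7_2 : gens17 7 2 = 0 := by decide
lemma g17_7_3 : gens17 7 3 = 1 := by decide
lemma g17_7_4 : gens17 7 4 = 0 := by decide
lemma g17_7_5 : gens17 7 5 = 1 := by decide
lemma g17_7_6 : gens17 7 6 = -1 := by decide

lemma zsmul_mem17 {M : AddSubmonoid (Fin 7 → ℤ)} {y : Fin 7 → ℤ} (hy : y ∈ M)
    {n : ℤ} (hn : 0 ≤ n) : n • y ∈ M := by
  rw [← Int.toNat_of_nonneg hn, natCast_zsmul]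
  exact AddSubmonoid.nsmul_mem M hy _

lemma mem17 (x : Fin 7 → ℤ) :
    x ∈ AddSubmonoid.closure (Set.range gens17) ↔
      (0 ≤ x 0 ∧ 0 ≤ x 1 ∧ 0 ≤ x 2 ∧ 0 ≤ x 3 ∧ 0 ≤ x 4 ∧ 0 ≤ x 5 ∧
        0 ≤ x 6 + x 1 ∧ 0 ≤ x 6 + x 3 ∧ 0 ≤ x 6 + x 5) := by
  constructor
  · intro hx
    refine AddSubmonoid.closure_induction ?_ ?_ ?_ hx
    · rintro y ⟨i, rfl⟩
      fin_cases i <;> decide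
    · simp
    · intro a b _ _ ha hb
      simp only [Pi.add_apply]
      omega
  · rintro ⟨h0, h1, h2, h3, h4, h5, h6, h7, h8⟩
    set m : ℤ := max 0 (-x 6) with hm
    have hm0 : 0 ≤ m := le_max_left _ _
    have hm6 : -x 6 ≤ m := le_max_right _ _
    have hm1 : m ≤ x 1 := max_le h1 (by omega)
    have hm3 : m ≤ x 3 := max_le h3 (by omega)
    have hm5 : m ≤ x 5 := max_le h5 (by omega)
    have key : x = x 0 • gens17 0 + (x 1 - m) • gens17 1 + x 2 • gens17 2 +
        (x 3 - m) • gens17 3 + x 4 • gens17 4 + (x 5 - m) • gens17 5 +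
        (x 6 + m) • gens17 6 + m • gens17 7 := by
      funext j
      fin_cases j <;>
        simp only [Fin.reduceFinMk, Pi.add_apply, Pi.smul_apply, smul_eq_mul, g17_0_0, g17_0_1, g17_0_2, g17_0_3, g17_0_4, g17_0_5, g17_0_6, g17_1_0, g17_1_1, g17_1_2, g17_1_3, g17_1_4, g17_1_5, g17_1_6, g17_2_0, g17_2_1, g17_2_2, g17_2_3, g17_2_4, g17_2_5, g17_2_6, g17_3_0, g17_3_1, g17_3_2, g17_3_3, g17_3_4, g17_3_5, g17_3_6, g17_4_0, g17_4_1, g17_4_2, g17_4_3, g17_4_4, g17_4_5, g17_4_6, g17_5_0, g17_5_1, g17_5_2, g17_5_3, g17_5_4, g17_5_5, g17_5_6, g17_6_0, g17_6_1, g17_6_2, g17_6_3, g17_6_4, g17_6_5, g17_6_6, g17_7_0, g17_7_1, g17_7_2, g17_7_3, g17_7_4, g17_7_5, g17_7_6] <;> ring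
    rw [key]
    have hg : ∀ i : Fin 8, gens17 i ∈ AddSubmonoid.closure (Set.range gens17) :=
      fun i => AddSubmonoid.subset_closure ⟨i, rfl⟩
    exact AddSubmonoid.add_mem _ (AddSubmonoid.add_mem _ (AddSubmonoid.add_mem _
      (AddSubmonoid.add_mem _ (AddSubmonoid.add_mem _ (AddSubmonoid.add_mem _
      (AddSubmonoid.add_mem _ (zsmul_mem17 (hg 0) h0) (zsmul_mem17 (hg 1) (by omega)))
      (zsmul_mem17 (hg 2) h2)) (zsmul_mem17 (hg 3) (by omega))) (zsmul_mem17 (hg 4) h4))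
      (zsmul_mem17 (hg 5) (by omega))) (zsmul_mem17 (hg 6) (by omega))) (zsmul_mem17 (hg 7) hm0)

lemma step17 (M : AddSubmonoid (Fin 7 → ℤ))
    (hM : M = AddSubmonoid.closure (Set.range gens17)) (x : Fin 7 → ℤ)
    (hirr : ¬ ∃ a ∈ M, ∃ b ∈ M, a ≠ 0 ∧ b ≠ 0 ∧ x = a + b) (i : Fin 8)
    (h : x - gens17 i ∈ M) : x = gens17 i := by
  by_contra hne
  have hg : gens17 i ∈ M := hM ▸ AddSubmonoid.subset_closure ⟨i, rfl⟩
  have hgne : gens17 i ≠ (0 : Fin 7 → ℤ) := by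
    fin_cases i
    · exact fun h => by simpa [g17_0_0] using congrFun h 0
    · exact fun h => by simpa [g17_1_1] using congrFun h 1
    · exact fun h => by simpa [g17_2_2] using congrFun h 2
    · exact fun h => by simpa [g17_3_3] using congrFun h 3
    · exact fun h => by simpa [g17_4_4] using congrFun h 4
    · exact fun h => by simpa [g17_5_5] using congrFun h 5
    · exact fun h => by simpa [g17_6_6] using congrFun h 6
    · exact fun h => by simpa [g17_7_1] using congrFun h 1
  refine hirr ⟨gens17 i, hg, x - gens17 i, h, hgne, ?_, by ring⟩
  intro h0
  exact hne (by rw [sub_eq_zero] at h0; exact h0)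

theorem stmt_17 (M : AddSubmonoid (Fin 7 → ℤ))
    (hM : M = AddSubmonoid.closure (Set.range gens17)) :
    {x : Fin 7 → ℤ | x ∈ M ∧ x ≠ 0 ∧
      ¬ ∃ a ∈ M, ∃ b ∈ M, a ≠ 0 ∧ b ≠ 0 ∧ x = a + b} = Set.range gens17 := by
  ext x
  simp only [Set.mem_setOf_eq]
  constructor
  · rintro ⟨hmem, hne, hirr⟩
    rw [hM, mem17] at hmem
    obtain ⟨h0, h1, h2, h3, h4, h5, h6, h7, h8⟩ := hmem
    by_cases c0 : 0 < x 0
    · exact ⟨0, (step17 M hM x hirr 0 (by rw [hM, mem17]; refine ⟨?_,?_,?_,?_,?_,?_,?_,?_,?_⟩ <;> simp only [Pi.sub_apply, g17_0_0, g17_0_1, g17_0_2, g17_0_3, g17_0_4, g17_0_5, g17_0_6, g17_1_0, g17_1_1, g17_1_2, g17_1_3, g17_1_4, g17_1_5, g17_1_6, g17_2_0, g17_2_1, g17_2_2, g17_2_3, g17_2_4, g17_2_5, g17_2_6, g17_3_0, g17_3_1, g17_3_2, g17_3_3, g17_3_4, g17_3_5, g17_3_6, g17_4_0, g17_4_1,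 g17_4_2, g17_4_3, g17_4_4, g17_4_5, g17_4_6, g17_5_0, g17_5_1, g17_5_2, g17_5_3, g17_5_4, g17_5_5, g17_5_6, g17_6_0, g17_6_1, g17_6_2, g17_6_3, g17_6_4, g17_6_5, g17_6_6, g17_7_0, g17_7_1, g17_7_2, g17_7_3, g17_7_4, g17_7_5, g17_7_6] <;> omega)).symm⟩
    by_cases c2 : 0 < x 2
    · exact ⟨2, (step17 M hM x hirr 2 (by rw [hM, mem17]; refine ⟨?_,?_,?_,?_,?_,?_,?_,?_,?_⟩ <;> simp only [Pi.sub_apply, g17_0_0, g17_0_1, g17_0_2, g17_0_3, g17_0_4, g17_0_5, g17_0_6, g17_1_0, g17_1_1, g17_1_2, g17_1_3, g17_1_4, g17_1_5, g17_1_6, g17_2_0, g17_2_1, g17_2_2, g17_2_3, g17_2_4, g17_2_5, g17_2_6, g17_3_0, g17_3_1, g17_3_2, g17_3_3, g17_3_4, g17_3_5, g17_3_6, g17_4_0, g17_4_1, g17_4_2, g17_4_3, g17_4_4, g17_4_5, g17_4_6, g17_5_0, g17_5_1, g17_5_2, g17_5_3, g17_5_4, g17_5_5, g17_5_6, g17_6_0,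 g17_6_1, g17_6_2, g17_6_3, g17_6_4, g17_6_5, g17_6_6, g17_7_0, g17_7_1, g17_7_2, g17_7_3, g17_7_4, g17_7_5, g17_7_6] <;> omega)).symm⟩
    by_cases c4 : 0 < x 4
    · exact ⟨4, (step17 M hM x hirr 4 (by rw [hM, mem17]; refine ⟨?_,?_,?_,?_,?_,?_,?_,?_,?_⟩ <;> simp only [Pi.sub_apply, g17_0_0, g17_0_1, g17_0_2, g17_0_3, g17_0_4, g17_0_5, g17_0_6, g17_1_0, g17_1_1, g17_1_2, g17_1_3, g17_1_4, g17_1_5, g17_1_6, g17_2_0, g17_2_1, g17_2_2, g17_2_3, g17_2_4, g17_2_5, g17_2_6, g17_3_0, g17_3_1, g17_3_2, g17_3_3, g17_3_4, g17_3_5, g17_3_6, g17_4_0, g17_4_1, g17_4_2, g17_4_3, g17_4_4, g17_4_5, g17_4_6, g17_5_0, g17_5_1, g17_5_2, g17_5_3, g17_5_4, g17_5_5, g17_5_6, g17_6_0, g17_6_1, g17_6_2, g17_6_3, g17_6_4, g17_6_5, g17_6_6, g17_7_0, g17_7_1, g17_7_2, g17_7_3, g17_7_4, g17_7_5, g17_7_6]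 <;> omega)).symm⟩
    by_cases c6 : 0 < x 6
    · exact ⟨6, (step17 M hM x hirr 6 (by rw [hM, mem17]; refine ⟨?_,?_,?_,?_,?_,?_,?_,?_,?_⟩ <;> simp only [Pi.sub_apply, g17_0_0, g17_0_1, g17_0_2, g17_0_3, g17_0_4, g17_0_5, g17_0_6, g17_1_0, g17_1_1, g17_1_2, g17_1_3, g17_1_4, g17_1_5, g17_1_6, g17_2_0, g17_2_1, g17_2_2, g17_2_3, g17_2_4, g17_2_5, g17_2_6, g17_3_0, g17_3_1, g17_3_2, g17_3_3, g17_3_4, g17_3_5, g17_3_6, g17_4_0, g17_4_1, g17_4_2, g17_4_3, g17_4_4, g17_4_5, g17_4_6, g17_5_0, g17_5_1, g17_5_2, g17_5_3, g17_5_4, g17_5_5, g17_5_6, g17_6_0, g17_6_1, g17_6_2, g17_6_3, g17_6_4, g17_6_5, g17_6_6, g17_7_0, g17_7_1, g17_7_2, g17_7_3, g17_7_4, g17_7_5, g17_7_6] <;> omega)).symm⟩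
    by_cases c6' : x 6 < 0
    · exact ⟨7, (step17 M hM x hirr 7 (by rw [hM, mem17]; refine ⟨?_,?_,?_,?_,?_,?_,?_,?_,?_⟩ <;> simp only [Pi.sub_apply, g17_0_0, g17_0_1, g17_0_2, g17_0_3, g17_0_4, g17_0_5, g17_0_6, g17_1_0, g17_1_1, g17_1_2, g17_1_3, g17_1_4, g17_1_5, g17_1_6, g17_2_0, g17_2_1, g17_2_2, g17_2_3, g17_2_4, g17_2_5, g17_2_6, g17_3_0, g17_3_1, g17_3_2, g17_3_3, g17_3_4, g17_3_5, g17_3_6, g17_4_0, g17_4_1, g17_4_2, g17_4_3, g17_4_4, g17_4_5, g17_4_6, g17_5_0, g17_5_1, g17_5_2, g17_5_3, g17_5_4, g17_5_5, g17_5_6, g17_6_0, g17_6_1, g17_6_2, g17_6_3, g17_6_4, g17_6_5, g17_6_6, g17_7_0, g17_7_1, g17_7_2, g17_7_3, g17_7_4, g17_7_5, g17_7_6] <;> omega)).symm⟩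
    have hx : 0 < x 1 ∨ 0 < x 3 ∨ 0 < x 5 := by
      by_contra hc
      push_neg at hc
      apply hne
      funext j
      fin_cases j <;> simp only [Fin.reduceFinMk, Pi.zero_apply] <;> omega
    rcases hx with c1 | c3 | c5
    · exact ⟨1, (step17 M hM x hirr 1 (by rw [hM, mem17]; refine ⟨?_,?_,?_,?_,?_,?_,?_,?_,?_⟩ <;> simp only [Pi.sub_apply, g17_0_0, g17_0_1, g17_0_2, g17_0_3, g17_0_4, g17_0_5, g17_0_6, g17_1_0, g17_1_1, g17_1_2, g17_1_3, g17_1_4, g17_1_5, g17_1_6, g17_2_0, g17_2_1, g17_2_2, g17_2_3, g17_2_4, g17_2_5, g17_2_6, g17_3_0, g17_3_1, g17_3_2, g17_3_3, g17_3_4, g17_3_5, g17_3_6, g17_4_0, g17_4_1, g17_4_2, g17_4_3, g17_4_4, g17_4_5, g17_4_6, g17_5_0, g17_5_1, g17_5_2, g17_5_3, g17_5_4, g17_5_5, g17_5_6, g17_6_0, g17_6_1, g17_6_2, g17_6_3, g17_6_4, g17_6_5, g17_6_6, g17_7_0, g17_7_1, g17_7_2, g17_7_3, g17_7_4, g17_7_5,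 g17_7_6] <;> omega)).symm⟩
    · exact ⟨3, (step17 M hM x hirr 3 (by rw [hM, mem17]; refine ⟨?_,?_,?_,?_,?_,?_,?_,?_,?_⟩ <;> simp only [Pi.sub_apply, g17_0_0, g17_0_1, g17_0_2, g17_0_3, g17_0_4, g17_0_5, g17_0_6, g17_1_0, g17_1_1, g17_1_2, g17_1_3, g17_1_4, g17_1_5, g17_1_6, g17_2_0, g17_2_1, g17_2_2, g17_2_3, g17_2_4, g17_2_5, g17_2_6, g17_3_0, g17_3_1, g17_3_2, g17_3_3, g17_3_4, g17_3_5, g17_3_6, g17_4_0, g17_4_1, g17_4_2, g17_4_3, g17_4_4, g17_4_5, g17_4_6, g17_5_0, g17_5_1, g17_5_2, g17_5_3, g17_5_4, g17_5_5, g17_5_6, g17_6_0, g17_6_1, g17_6_2, g17_6_3, g17_6_4, g17_6_5, g17_6_6, g17_7_0, g17_7_1, g17_7_2, g17_7_3, g17_7_4, g17_7_5, g17_7_6] <;> omega)).symm⟩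
    · exact ⟨5, (step17 M hM x hirr 5 (by rw [hM, mem17]; refine ⟨?_,?_,?_,?_,?_,?_,?_,?_,?_⟩ <;> simp only [Pi.sub_apply, g17_0_0, g17_0_1, g17_0_2, g17_0_3, g17_0_4, g17_0_5, g17_0_6, g17_1_0, g17_1_1, g17_1_2, g17_1_3, g17_1_4, g17_1_5, g17_1_6, g17_2_0, g17_2_1, g17_2_2, g17_2_3, g17_2_4, g17_2_5, g17_2_6, g17_3_0, g17_3_1, g17_3_2, g17_3_3, g17_3_4, g17_3_5, g17_3_6, g17_4_0, g17_4_1, g17_4_2, g17_4_3, g17_4_4, g17_4_5, g17_4_6, g17_5_0, g17_5_1, g17_5_2, g17_5_3, g17_5_4, g17_5_5, g17_5_6, g17_6_0, g17_6_1, g17_6_2, g17_6_3, g17_6_4, g17_6_5, g17_6_6, g17_7_0, g17_7_1, g17_7_2, g17_7_3, g17_7_4, g17_7_5, g17_7_6] <;> omega)).symm⟩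
  · rintro ⟨i, rfl⟩
    have hg : gens17 i ∈ M := hM ▸ AddSubmonoid.subset_closure ⟨i, rfl⟩
    refine ⟨hg, ?_, ?_⟩
    · fin_cases i
      · exact fun h => by simpa [g17_0_0] using congrFun h 0
      · exact fun h => by simpa [g17_1_1] using congrFun h 1
      · exact fun h => by simpa [g17_2_2] using congrFun h 2
      · exact fun h => by simpa [g17_3_3] using congrFun h 3
      · exact fun h => by simpa [g17_4_4] using congrFun h 4
      · exact fun h => by simpa [g17_5_5] using congrFun h 5
      · exact fun h => by simpa [g17_6_6] using congrFun h 6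
      · exact fun h => by simpa [g17_7_1] using congrFun h 1
    · rintro ⟨a, ha, b, hb, ha0, hb0, hab⟩
      rw [hM, mem17] at ha hb
      obtain ⟨a0, a1, a2, a3, a4, a5, a6, a7, a8⟩ := ha
      obtain ⟨b0, b1, b2, b3, b4, b5, b6, b7, b8⟩ := hb
      have e0 := congrFun hab 0
      have e1 := congrFun hab 1
      have e2 := congrFun hab 2
      have e3 := congrFun hab 3
      have e4 := congrFun hab 4
      have e5 := congrFun hab 5
      have e6 := congrFun hab 6
      have hA : ¬(a 0 = 0 ∧ a 1 = 0 ∧ a 2 = 0 ∧ a 3 = 0 ∧ a 4 = 0 ∧ a 5 = 0 ∧ a 6 = 0) := by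
        intro h
        apply ha0
        funext j
        fin_cases j <;> simp only [Fin.reduceFinMk, Pi.zero_apply] <;> omega
      have hB : ¬(b 0 = 0 ∧ b 1 = 0 ∧ b 2 = 0 ∧ b 3 = 0 ∧ b 4 = 0 ∧ b 5 = 0 ∧ b 6 = 0) := by
        intro h
        apply hb0
        funext j
        fin_cases j <;> simp only [Fin.reduceFinMk, Pi.zero_apply] <;> omega
      fin_cases i <;>
        simp only [Fin.reduceFinMk, Pi.add_apply, g17_0_0, g17_0_1, g17_0_2, g17_0_3, g17_0_4, g17_0_5, g17_0_6, g17_1_0, g17_1_1, g17_1_2, g17_1_3, g17_1_4, g17_1_5, g17_1_6, g17_2_0, g17_2_1, g17_2_2, g17_2_3, g17_2_4, g17_2_5, g17_2_6, g17_3_0, g17_3_1, g17_3_2, g17_3_3, g17_3_4, g17_3_5, g17_3_6, g17_4_0, g17_4_1, g17_4_2, g17_4_3, g17_4_4, g17_4_5, g17_4_6, g17_5_0, g17_5_1, g17_5_2, g17_5_3, g17_5_4, g17_5_5, g17_5_6, g17_6_0, g17_6_1, g17_6_2, g17_6_3, g17_6_4, g17_6_5, g17_6_6, g17_7_0, g17_7_1,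 g17_7_2, g17_7_3, g17_7_4, g17_7_5, g17_7_6] at e0 e1 e2 e3 e4 e5 e6 <;> omega
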